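/- Let a_1, a_2, b_1, b_2 be nonnegative real numbers. Then v(t) = t^{a_1} + t^{a_2} − t^{b_1} − t^{b_2} ≥ 0 for all t ∈ (0,1] if and only if min(a_1,a_2) ≤ min(b_1,b_2) and a_1 + a_2 ≤ b_1 + b_2. -/

import Mathlib

-- Sufficiency helper, in sorted form a₁ ≤ a₂, b₁ ≤ b₂
private lemma suff_aux (t a₁ a₂ b₁ b₂ : ℝ) (ht0 : 0 < t) (ht1 : t ≤ 1)
    (hbb : b₁ ≤ b₂) (h1 : a₁ ≤ b₁) (h2 : a₁ + a₂ ≤ b₁ + b₂) :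
    t ^ b₁ + t ^ b₂ ≤ t ^ a₁ + t ^ a₂ := by
  rcases le_or_gt a₂ b₂ with h | h
  · have e1 : t ^ b₁ ≤ t ^ a₁ := Real.rpow_le_rpow_of_exponent_ge ht0 ht1 h1
    have e2 : t ^ b₂ ≤ t ^ a₂ := Real.rpow_le_rpow_of_exponent_ge ht0 ht1 h
    linarith
  · -- b₂ < a₂, so a₁ ≤ b₁ ≤ b₂ < a₂
    have ha1b2 : a₁ ≤ b₂ := h1.trans hbb
    have hX : t ^ b₁ = t ^ a₁ * t ^ (b₁ - a₁) := by
      rw [← Real.rpow_add ht0]; ring_nf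
    have hY : t ^ a₂ = t ^ b₂ * t ^ (a₂ - b₂) := by
      rw [← Real.rpow_add ht0]; ring_nf
    have hXY : t ^ (b₁ - a₁) ≤ t ^ (a₂ - b₂) :=
      Real.rpow_le_rpow_of_exponent_ge ht0 ht1 (by linarith)
    have hY1 : t ^ (a₂ - b₂) ≤ 1 := Real.rpow_le_one ht0.le ht1 (by linarith)
    have hT : t ^ b₂ ≤ t ^ a₁ := Real.rpow_le_rpow_of_exponent_ge ht0 ht1 ha1b2
    have hpos : (0:ℝ) ≤ t ^ b₂ := (Real.rpow_pos_of_pos ht0 _).le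
    nlinarith [Real.rpow_pos_of_pos ht0 a₁]

private lemma suff_lemma (t a₁ a₂ b₁ b₂ : ℝ) (ht0 : 0 < t) (ht1 : t ≤ 1)
    (hmin : min a₁ a₂ ≤ min b₁ b₂) (hsum : a₁ + a₂ ≤ b₁ + b₂) :
    t ^ b₁ + t ^ b₂ ≤ t ^ a₁ + t ^ a₂ := by
  rcases le_total a₁ a₂ with ha | ha <;> rcases le_total b₁ b₂ with hb | hb
  · have := suff_aux t a₁ a₂ b₁ b₂ ht0 ht1 hb
      (by simpa [min_eq_left ha, min_eq_left hb] using hmin) hsum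
    linarith
  · have := suff_aux t a₁ a₂ b₂ b₁ ht0 ht1 hb
      (by simpa [min_eq_left ha, min_eq_right hb] using hmin) (by linarith)
    linarith
  · have := suff_aux t a₂ a₁ b₁ b₂ ht0 ht1 hb
      (by simpa [min_eq_right ha, min_eq_left hb] using hmin) (by linarith)
    linarith
  · have := suff_aux t a₂ a₁ b₂ b₁ ht0 ht1 hb
      (by simpa [min_eq_right ha, min_eq_right hb] using hmin) (by linarith)
    linarith

theorem stmt3 (a₁ a₂ b₁ b₂ : ℝ) (ha₁ : 0 ≤ a₁) (ha₂ : 0 ≤ a₂)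
    (hb₁ : 0 ≤ b₁) (hb₂ : 0 ≤ b₂) :
    (∀ t ∈ Set.Ioc (0 : ℝ) 1, 0 ≤ t ^ a₁ + t ^ a₂ - t ^ b₁ - t ^ b₂) ↔
      (min a₁ a₂ ≤ min b₁ b₂ ∧ a₁ + a₂ ≤ b₁ + b₂) := by
  constructor
  · intro hv
    constructor
    · -- min a ≤ min b
      by_contra hcon
      push_neg at hcon
      set m := min b₁ b₂ with hm
      set c := min a₁ a₂ - m with hc
      have hcpos : 0 < c := sub_pos.mpr hcon
      set t := ((1:ℝ)/3) ^ (1/c) with ht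
      have ht0 : 0 < t := Real.rpow_pos_of_pos (by norm_num) _
      have ht1 : t < 1 := Real.rpow_lt_one (by norm_num) (by norm_num)
        (by positivity)
      have htc : t ^ c = 1/3 := by
        rw [ht, ← Real.rpow_mul (by norm_num), one_div_mul_cancel hcpos.ne',
          Real.rpow_one]
      have hma : t ^ (min a₁ a₂) = t ^ m * t ^ c := by
        rw [← Real.rpow_add ht0, hc]; ring_nf
      have e1 : t ^ a₁ ≤ t ^ (min a₁ a₂) :=
        Real.rpow_le_rpow_of_exponent_ge ht0 ht1.le (min_le_left _ _)
      have e2 : t ^ a₂ ≤ t ^ (min a₁ a₂) :=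
        Real.rpow_le_rpow_of_exponent_ge ht0 ht1.le (min_le_right _ _)
      have e3 : t ^ m ≤ t ^ b₁ + t ^ b₂ := by
        rcases le_total b₁ b₂ with hb | hb
        · have : m = b₁ := min_eq_left hb
          rw [this]
          linarith [Real.rpow_pos_of_pos ht0 b₂]
        · have : m = b₂ := min_eq_right hb
          rw [this]
          linarith [Real.rpow_pos_of_pos ht0 b₁]
      have hmpos : 0 < t ^ m := Real.rpow_pos_of_pos ht0 m
      have := hv t ⟨ht0, ht1.le⟩
      rw [htc] at hma
      linarith
    · -- sums
      by_contra hcon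
      push_neg at hcon
      set f : ℝ → ℝ := fun t => t ^ a₁ + t ^ a₂ - t ^ b₁ - t ^ b₂ with hf
      have hd : HasDerivAt f (a₁ + a₂ - b₁ - b₂) 1 := by
        have d1 := Real.hasDerivAt_rpow_const (x := 1) (p := a₁) (Or.inl one_ne_zero)
        have d2 := Real.hasDerivAt_rpow_const (x := 1) (p := a₂) (Or.inl one_ne_zero)
        have d3 := Real.hasDerivAt_rpow_const (x := 1) (p := b₁) (Or.inl one_ne_zero)
        have d4 := Real.hasDerivAt_rpow_const (x := 1) (p := b₂) (Or.inl one_ne_zero)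
        have := ((d1.add d2).sub d3).sub d4
        simp [Real.one_rpow] at this; exact this
      rw [hasDerivAt_iff_tendsto_slope] at hd
      have hd' : Filter.Tendsto (slope f 1) (nhdsWithin 1 (Set.Iio 1))
          (nhds (a₁ + a₂ - b₁ - b₂)) :=
        hd.mono_left (nhdsWithin_mono _ (fun x hx => ne_of_lt hx))
      have hev : ∀ᶠ tt in nhdsWithin 1 (Set.Iio 1), 0 < slope f 1 tt :=
        hd' (eventually_gt_nhds (by linarith : (0:ℝ) < a₁ + a₂ - b₁ - b₂))
      have hmem : ∀ᶠ tt in nhdsWithin (1:ℝ) (Set.Iio 1), tt ∈ Set.Ioo (0:ℝ) 1 :=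
        Ioo_mem_nhdsLT_of_mem (by norm_num : (1:ℝ) ∈ Set.Ioc 0 1)
      obtain ⟨tt, hsl, htt⟩ := (hev.and hmem).exists
      have hf1 : f 1 = 0 := by simp [hf, Real.one_rpow]
      rw [slope_def_field, hf1, sub_zero] at hsl
      have : f tt < 0 := by
        have h1 : tt - 1 < 0 := by linarith [htt.2]
        by_contra hge
        push_neg at hge
        have : f tt / (tt - 1) ≤ 0 := div_nonpos_of_nonneg_of_nonpos hge h1.le
        linarith
      have := hv tt ⟨htt.1, htt.2.le⟩
      have hft : f tt = tt ^ a₁ + tt ^ a₂ - tt ^ b₁ - tt ^ b₂ := rfl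
      linarith
  · rintro ⟨hmin, hsum⟩ t ⟨ht0, ht1⟩
    have := suff_lemma t a₁ a₂ b₁ b₂ ht0 ht1 hmin hsum
    linarith
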